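/- Let X, X' be i.i.d. real random variables and δ > 0 such that sup_{x∈ℝ} P(|X| ∈ (x−δ, x+δ)) ≤ 1−δ. Then P(|X − X'| ≥ δ) ≥ δ. -/

import Mathlib

open MeasureTheory ProbabilityTheory
open scoped ENNReal

/-- If `X, X'` are i.i.d. and `sup_x P(|X| ∈ (x−δ, x+δ)) ≤ 1−δ`, then
`P(|X − X'| ≥ δ) ≥ δ`. -/
theorem stmt10 {Ω : Type*} [MeasureSpace Ω] [IsProbabilityMeasure (ℙ : Measure Ω)]
    (X X' : Ω → ℝ) (hmeas : Measurable X) (hmeas' : Measurable X')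
    (hindep : IndepFun X X' ℙ)
    (hiid : Measure.map X' ℙ = Measure.map X ℙ)
    (δ : ℝ) (hδ : 0 < δ)
    (hanti : ∀ x : ℝ, ℙ {ω | |X ω| ∈ Set.Ioo (x - δ) (x + δ)} ≤ ENNReal.ofReal (1 - δ)) :
    ENNReal.ofReal δ ≤ ℙ {ω | δ ≤ |X ω - X' ω|} := by
  by_cases hδ1 : δ ≤ 1
  swap
  · exfalso
    push_neg at hδ1
    have h0 : ∀ x : ℝ, ℙ {ω | |X ω| ∈ Set.Ioo (x - δ) (x + δ)} = 0 := by
      intro x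
      have hz : (1:ℝ) - δ ≤ 0 := by linarith
      have := hanti x
      rw [ENNReal.ofReal_eq_zero.mpr hz] at this
      exact le_antisymm this zero_le
    have cover : (Set.univ : Set Ω) ⊆ ⋃ q : ℚ, {ω | |X ω| ∈ Set.Ioo ((q:ℝ) - δ) ((q:ℝ) + δ)} := by
      intro ω _
      obtain ⟨q, hq1, hq2⟩ := exists_rat_btwn (sub_lt_self (|X ω|) hδ)
      exact Set.mem_iUnion.2 ⟨q, Set.mem_Ioo.2 ⟨by linarith, by linarith⟩⟩
    have := (measure_mono (μ := ℙ) cover).trans (measure_iUnion_le fun q : ℚ => {ω | |X ω| ∈ Set.Ioo ((q:ℝ) - δ) ((q:ℝ) + δ)})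
    simp only [h0, tsum_zero, measure_univ] at this
    exact one_ne_zero (le_antisymm this zero_le)
  -- main case δ ≤ 1
  have hS : MeasurableSet {p : ℝ × ℝ | |p.1| ∈ Set.Ioo (|p.2| - δ) (|p.2| + δ)} := by
    have h1 : Measurable fun p : ℝ × ℝ => |p.1| := measurable_fst.abs
    have h2 : Measurable fun p : ℝ × ℝ => |p.2| := measurable_snd.abs
    exact (measurableSet_lt (h2.sub measurable_const) h1).inter
      (measurableSet_lt h1 (h2.add measurable_const))
  have hXm : Measurable fun ω => (X ω, X' ω) := hmeas.prodMk hmeas'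
  set A : Set Ω := {ω | |X ω - X' ω| < δ} with hA
  have hAmeas : MeasurableSet A :=
    measurableSet_lt (hmeas.sub hmeas').abs measurable_const
  have hstep : ℙ A ≤ ENNReal.ofReal (1 - δ) := by
    have hsub : A ⊆ {ω | |X ω| ∈ Set.Ioo (|X' ω| - δ) (|X' ω| + δ)} := by
      intro ω hω
      have h := abs_abs_sub_abs_le_abs_sub (X ω) (X' ω)
      have h2 := abs_lt.mp (lt_of_le_of_lt h hω)
      exact ⟨by linarith [h2.1], by linarith [h2.2]⟩
    calc ℙ A ≤ ℙ {ω | |X ω| ∈ Set.Ioo (|X' ω| - δ) (|X' ω| + δ)} := measure_mono hsub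
    _ = (Measure.map (fun ω => (X ω, X' ω)) ℙ)
        {p : ℝ × ℝ | |p.1| ∈ Set.Ioo (|p.2| - δ) (|p.2| + δ)} := by
        rw [Measure.map_apply hXm hS]; rfl
    _ = ((Measure.map X ℙ).prod (Measure.map X' ℙ))
        {p : ℝ × ℝ | |p.1| ∈ Set.Ioo (|p.2| - δ) (|p.2| + δ)} := by
        rw [(indepFun_iff_map_prod_eq_prod_map_map hmeas.aemeasurable
          hmeas'.aemeasurable).mp hindep]
    _ = ∫⁻ y, (Measure.map X ℙ)
          ((fun x => (x, y)) ⁻¹' {p : ℝ × ℝ | |p.1| ∈ Set.Ioo (|p.2| - δ) (|p.2| + δ)})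
          ∂(Measure.map X' ℙ) := Measure.prod_apply_symm hS
    _ ≤ ∫⁻ _, ENNReal.ofReal (1 - δ) ∂(Measure.map X' ℙ) := by
        refine lintegral_mono fun y => ?_
        have hms : MeasurableSet {x : ℝ | |x| ∈ Set.Ioo (|y| - δ) (|y| + δ)} :=
          (measurableSet_lt measurable_const measurable_id.abs).inter
            (measurableSet_lt measurable_id.abs measurable_const)
        have hpre : ((fun x => (x, y)) ⁻¹' {p : ℝ × ℝ | |p.1| ∈ Set.Ioo (|p.2| - δ) (|p.2| + δ)})
            = {x : ℝ | |x| ∈ Set.Ioo (|y| - δ) (|y| + δ)} := rfl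
        rw [hpre, Measure.map_apply hmeas hms]
        exact hanti (|y|)
    _ = ENNReal.ofReal (1 - δ) := by
        have : IsProbabilityMeasure (Measure.map X' ℙ) :=
          Measure.isProbabilityMeasure_map hmeas'.aemeasurable
        rw [lintegral_const, measure_univ, mul_one]
  have hc : {ω | δ ≤ |X ω - X' ω|} = Aᶜ := by
    ext ω; simp [hA, not_lt]
  rw [hc, measure_compl hAmeas (measure_ne_top _ _), measure_univ]
  have heq : ENNReal.ofReal δ = 1 - ENNReal.ofReal (1 - δ) := by
    rw [← ENNReal.ofReal_one, ← ENNReal.ofReal_sub _ (by linarith : (0:ℝ) ≤ 1 - δ)]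
    norm_num
  rw [heq]
  exact tsub_le_tsub_left hstep 1
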